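/- Let G be a finite simple graph of maximum degree at most d and let (≺, save) be a legal removal scheme on G. Then G is weakly (d − gap(≺, save))-degenerate. -/
import Mathlib


open scoped Classical

namespace WeakDeg

variable {V : Type*}

/-- `WeakDegenOn G S f` means: starting from the induced subgraph `G[S]` of `G` with value
function `f`, it is possible to remove all vertices by a sequence of legal applications of the
operations `Delete` and `DelSave`. `Delete(u)` removes `u` and decreases by one the value of
every remaining neighbor of `u`; it is legal if the resulting function is nonnegative on the
remaining vertices. `DelSave(u, w)` (for `w` a neighbor of `u` with `f w < f u`) removes `u` and
decreases by one the value of every remaining neighbor of `u` except `w`; it is legal if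
`f w < f u` and the resulting function is nonnegative on the remaining vertices. -/
inductive WeakDegenOn (G : SimpleGraph V) : Finset V → (V → ℤ) → Prop
  | empty (f : V → ℤ) : WeakDegenOn G ∅ f
  | delete (S : Finset V) (f : V → ℤ) (u : V) (hu : u ∈ S)
      (hleg : ∀ v ∈ S.erase u, 0 ≤ if G.Adj u v then f v - 1 else f v)
      (h : WeakDegenOn G (S.erase u) fun v => if G.Adj u v then f v - 1 else f v) :
      WeakDegenOn G S f
  | delSave (S : Finset V) (f : V → ℤ) (u w : V) (hu : u ∈ S) (hw : w ∈ S)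
      (hadj : G.Adj u w) (hlt : f w < f u)
      (hleg : ∀ v ∈ S.erase u, 0 ≤ if G.Adj u v ∧ v ≠ w then f v - 1 else f v)
      (h : WeakDegenOn G (S.erase u) fun v => if G.Adj u v ∧ v ≠ w then f v - 1 else f v) :
      WeakDegenOn G S f

/-- `G` is weakly `f`-degenerate, for `f : V → ℕ`. -/
def WeaklyDegenerateWith (G : SimpleGraph V) [Fintype V] (f : V → ℕ) : Prop :=
  WeakDegenOn G Finset.univ fun v => (f v : ℤ)

/-- `G` is weakly `d`-degenerate. -/
def WeaklyDegenerate (G : SimpleGraph V) [Fintype V] (d : ℕ) : Prop :=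
  WeaklyDegenerateWith G fun _ => d

/-- The weak degeneracy `wd(G)` of `G`: the least `d` such that `G` is weakly `d`-degenerate. -/
noncomputable def weakDegeneracy (G : SimpleGraph V) [Fintype V] : ℕ :=
  sInf {d : ℕ | WeaklyDegenerate G d}

/-- If `G` has maximum degree at most `d` and `(≺, save)` is a legal removal scheme on `G`,
then `G` is weakly `(d - gap(≺, save))`-degenerate. Here a removal scheme is a strict linear
order `≺` on the vertices together with a partial function `save` sending a vertex `u` to a
neighbor `save u` with `u ≺ save u`; it is legal if whenever `save u = some w`, the number of
neighbors `v` of `u` with `v ≺ u` and `save v ≠ u` is strictly less than the number of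
neighbors `v` of `w` with `v ≺ u` and `save v ≠ w`; and
`gap(u) = #{v ∈ N(u) : u ≺ v} + #{v ∈ N(u) : save v = u}`,
`gap(≺, save) = min over u of gap(u)`. -/
theorem WeakDegenOn.congr {G : SimpleGraph V} {S : Finset V} {f : V → ℤ}
    (h : WeakDegenOn G S f) : ∀ {g : V → ℤ}, (∀ v ∈ S, f v = g v) → WeakDegenOn G S g := by
  induction h with
  | empty f => exact fun _ => .empty _
  | delete S f u hu hleg h ih =>
    intro g hfg
    have e : ∀ v ∈ S.erase u, (if G.Adj u v then f v - 1 else f v)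
        = (if G.Adj u v then g v - 1 else g v) := by
      intro v hv; rw [hfg v (Finset.mem_of_mem_erase hv)]
    refine .delete S g u hu (fun v hv => ?_) (ih fun v hv => e v hv)
    rw [← e v hv]; exact hleg v hv
  | delSave S f u w hu hw hadj hlt hleg h ih =>
    intro g hfg
    have e : ∀ v ∈ S.erase u, (if G.Adj u v ∧ v ≠ w then f v - 1 else f v)
        = (if G.Adj u v ∧ v ≠ w then g v - 1 else g v) := by
      intro v hv; rw [hfg v (Finset.mem_of_mem_erase hv)]
    refine .delSave S g u w hu hw hadj ?_ (fun v hv => ?_) (ih fun v hv => e v hv)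
    · rw [← hfg u hu, ← hfg w hw]; exact hlt
    · rw [← e v hv]; exact hleg v hv

theorem count_le {V : Type*} [Fintype V] (G : SimpleGraph V) [DecidableRel G.Adj]
    (lt : V → V → Prop) (hlt : IsStrictTotalOrder V lt) (save : V → Option V)
    (hscheme : ∀ u w, save u = some w → G.Adj u w ∧ lt u w) (k : ℕ)
    (hk : ∀ x : V, G.degree x ≤
      k + ({v | G.Adj x v ∧ lt x v}.ncard + {v | G.Adj x v ∧ save v = some x}.ncard))
    (S : Finset V) (hS : ∀ x ∈ S, ∀ y, lt x y → y ∈ S) (x : V) (hx : x ∈ S) :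
    {v | G.Adj x v ∧ v ∉ S ∧ save v ≠ some x}.ncard ≤ k := by
  haveI := hlt
  have hkx := hk x
  set A := {v | G.Adj x v ∧ v ∉ S ∧ save v ≠ some x}
  set B := {v | G.Adj x v ∧ lt x v}
  set C := {v | G.Adj x v ∧ save v = some x}
  have hAB : Disjoint A B := by
    rw [Set.disjoint_left]
    rintro v ⟨-, hvS, -⟩ ⟨-, hxv⟩
    exact hvS (hS x hx v hxv)
  have hAC : Disjoint A C := by
    rw [Set.disjoint_left]; rintro v ⟨-, -, hne⟩ ⟨-, he⟩; exact hne he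
  have hBC : Disjoint B C := by
    rw [Set.disjoint_left]
    rintro v ⟨-, hxv⟩ ⟨-, he⟩
    exact asymm hxv (hscheme v x he).2
  have hsub : A ∪ B ∪ C ⊆ G.neighborSet x := by
    rintro v ((hv | hv) | hv) <;> exact hv.1
  have h1 : (A ∪ B ∪ C).ncard = A.ncard + B.ncard + C.ncard := by
    rw [Set.ncard_union_eq (by simp [Set.disjoint_union_left, hAC, hBC]),
      Set.ncard_union_eq hAB]
  have h2 : (A ∪ B ∪ C).ncard ≤ (G.neighborSet x).ncard :=
    Set.ncard_le_ncard hsub (Set.toFinite _)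
  have h3 : (G.neighborSet x).ncard = G.degree x := by
    rw [Set.ncard_eq_toFinset_card', Set.toFinset_card]
    exact G.card_neighborSet_eq_degree x
  omega


theorem erase_count {V : Type*} [Fintype V] (G : SimpleGraph V) [DecidableRel G.Adj]
    (save : V → Option V) (S : Finset V) (u : V) (hu : u ∈ S) (x : V) :
    {v | G.Adj x v ∧ v ∉ S.erase u ∧ save v ≠ some x}.ncard
      = {v | G.Adj x v ∧ v ∉ S ∧ save v ≠ some x}.ncard
        + (if G.Adj x u ∧ save u ≠ some x then 1 else 0) := by
  set A := {v | G.Adj x v ∧ v ∉ S ∧ save v ≠ some x}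
  by_cases h : G.Adj x u ∧ save u ≠ some x
  · have he : {v | G.Adj x v ∧ v ∉ S.erase u ∧ save v ≠ some x} = insert u A := by
      ext v
      by_cases hvu : v = u
      · subst hvu; simp [Finset.mem_erase, h]
      · simp only [Set.mem_setOf_eq, Finset.mem_erase, Set.mem_insert_iff, hvu, false_or]
        constructor
        · rintro ⟨h1, h2, h3⟩; exact ⟨h1, fun hv => h2 ⟨hvu, hv⟩, h3⟩
        · rintro ⟨h1, h2, h3⟩; exact ⟨h1, fun hv => h2 hv.2, h3⟩
    rw [he, Set.ncard_insert_of_notMem (fun hmem => hmem.2.1 hu) (Set.toFinite _), if_pos h]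
  · have he : {v | G.Adj x v ∧ v ∉ S.erase u ∧ save v ≠ some x} = A := by
      ext v
      by_cases hvu : v = u
      · subst hvu
        simp only [Set.mem_setOf_eq, Finset.mem_erase, A]
        constructor
        · rintro ⟨h1, -, h3⟩; exact absurd ⟨h1, h3⟩ h
        · rintro ⟨h1, h2, h3⟩; exact absurd ⟨h1, h3⟩ h
      · simp only [Set.mem_setOf_eq, Finset.mem_erase, hvu, false_and, A]
        constructor
        · rintro ⟨h1, h2, h3⟩; exact ⟨h1, fun hv => h2 ⟨hvu, hv⟩, h3⟩
        · rintro ⟨h1, h2, h3⟩; exact ⟨h1, fun hv => h2 hv.2, h3⟩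
    rw [he, if_neg h, Nat.add_zero]

theorem exists_min_sto (lt : V → V → Prop) (hlt : IsStrictTotalOrder V lt)
    (S : Finset V) (hS : S.Nonempty) : ∃ u ∈ S, ∀ v ∈ S, v ≠ u → lt u v := by
  haveI := hlt
  induction hS using Finset.Nonempty.cons_induction with
  | singleton a => exact ⟨a, by simp, fun v hv hne => absurd (Finset.mem_singleton.mp hv) hne⟩
  | cons a S ha hS ih =>
    obtain ⟨u, hu, hmin⟩ := ih
    have hau : a ≠ u := fun h => ha (h ▸ hu)
    rcases trichotomous_of lt a u with h | h | h
    · refine ⟨a, Finset.mem_cons_self a S, fun v hv hne => ?_⟩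
      rcases Finset.mem_cons.mp hv with rfl | hv
      · exact absurd rfl hne
      · by_cases hvu : v = u
        · exact hvu ▸ h
        · exact _root_.trans h (hmin v hv hvu)
    · exact absurd h hau
    · refine ⟨u, Finset.mem_cons.mpr (Or.inr hu), fun v hv hne => ?_⟩
      rcases Finset.mem_cons.mp hv with rfl | hv
      · exact h
      · exact hmin v hv hne

theorem ab_le_deg {V : Type*} [Fintype V] (G : SimpleGraph V) [DecidableRel G.Adj]
    (lt : V → V → Prop) (hlt : IsStrictTotalOrder V lt) (save : V → Option V)
    (hscheme : ∀ u w, save u = some w → G.Adj u w ∧ lt u w) (x : V) :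
    {v | G.Adj x v ∧ lt x v}.ncard + {v | G.Adj x v ∧ save v = some x}.ncard ≤ G.degree x := by
  haveI := hlt
  set B := {v | G.Adj x v ∧ lt x v}
  set C := {v | G.Adj x v ∧ save v = some x}
  have hBC : Disjoint B C := by
    rw [Set.disjoint_left]
    rintro v ⟨-, hxv⟩ ⟨-, he⟩
    exact asymm hxv (hscheme v x he).2
  have hsub : B ∪ C ⊆ G.neighborSet x := by
    rintro v (hv | hv) <;> exact hv.1
  have h1 : (B ∪ C).ncard = B.ncard + C.ncard := Set.ncard_union_eq hBC
  have h2 : (B ∪ C).ncard ≤ (G.neighborSet x).ncard :=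
    Set.ncard_le_ncard hsub (Set.toFinite _)
  have h3 : (G.neighborSet x).ncard = G.degree x := by
    rw [Set.ncard_eq_toFinset_card', Set.toFinset_card]
    exact G.card_neighborSet_eq_degree x
  omega

theorem aux {V : Type*} [Fintype V] (G : SimpleGraph V) [DecidableRel G.Adj]
    (lt : V → V → Prop) (hlt : IsStrictTotalOrder V lt) (save : V → Option V)
    (hscheme : ∀ u w, save u = some w → G.Adj u w ∧ lt u w)
    (hlegal : ∀ u w, save u = some w →
      {v | G.Adj u v ∧ lt v u ∧ save v ≠ some u}.ncard <
        {v | G.Adj w v ∧ lt v u ∧ save v ≠ some w}.ncard)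
    (k : ℕ)
    (hk : ∀ x : V, G.degree x ≤
      k + ({v | G.Adj x v ∧ lt x v}.ncard + {v | G.Adj x v ∧ save v = some x}.ncard))
    (S : Finset V) (hS : ∀ x ∈ S, ∀ y, lt x y → y ∈ S) :
    WeakDegenOn G S
      (fun x => (k : ℤ) - ({v | G.Adj x v ∧ v ∉ S ∧ save v ≠ some x}.ncard : ℤ)) := by
  haveI := hlt
  induction S using Finset.strongInduction with
  | _ S ih =>
  rcases S.eq_empty_or_nonempty with rfl | hne
  · exact .empty _
  obtain ⟨u, hu, hmin⟩ := exists_min_sto lt hlt S hne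
  have hmem : ∀ v, v ∉ S ↔ lt v u := by
    intro v
    constructor
    · intro hv
      have hvu : v ≠ u := fun h => hv (h ▸ hu)
      rcases trichotomous_of lt v u with h | h | h
      · exact h
      · exact absurd h hvu
      · exact absurd (hS u hu v h) hv
    · intro h hvS
      by_cases hvu : v = u
      · subst hvu; exact irrefl_of lt v h
      · exact asymm_of lt h (hmin v hvS hvu)
  have hS' : ∀ x ∈ S.erase u, ∀ y, lt x y → y ∈ S.erase u := by
    intro x hx y hxy
    have hxS := Finset.mem_of_mem_erase hx
    refine Finset.mem_erase.mpr ⟨fun hyu => ?_, hS x hxS y hxy⟩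
    exact ((hmem x).mpr (hyu ▸ hxy)) hxS
  have ihS := ih (S.erase u) (Finset.erase_ssubset hu) hS'
  have hcle : ∀ v ∈ S.erase u,
      ({v' | G.Adj v v' ∧ v' ∉ S.erase u ∧ save v' ≠ some v}.ncard : ℕ) ≤ k :=
    fun v hv => count_le G lt hlt save hscheme k hk (S.erase u) hS' v hv
  rcases hsave : save u with _ | w
  · -- Delete case
    have hec : ∀ v, G.Adj u v →
        {v' | G.Adj v v' ∧ v' ∉ S.erase u ∧ save v' ≠ some v}.ncard
          = {v' | G.Adj v v' ∧ v' ∉ S ∧ save v' ≠ some v}.ncard + 1 := by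
      intro v hadj
      rw [erase_count G save S u hu v, if_pos ⟨hadj.symm, by simp [hsave]⟩]
    have hec' : ∀ v, ¬ G.Adj u v →
        {v' | G.Adj v v' ∧ v' ∉ S.erase u ∧ save v' ≠ some v}.ncard
          = {v' | G.Adj v v' ∧ v' ∉ S ∧ save v' ≠ some v}.ncard := by
      intro v hadj
      rw [erase_count G save S u hu v, if_neg (fun h => hadj h.1.symm), Nat.add_zero]
    refine WeakDegenOn.delete S _ u hu (fun v hv => ?_) ?_
    · have h1 := hcle v hv
      split_ifs with h
      · rw [hec v h] at h1; omega
      · rw [hec' v h] at h1; omega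
    · refine WeakDegenOn.congr ihS (fun v hv => ?_)
      split_ifs with h
      · rw [hec v h]; push_cast; ring
      · rw [hec' v h]
  · -- DelSave case
    obtain ⟨hadjuw, hltuw⟩ := hscheme u w hsave
    have hw : w ∈ S := hS u hu w hltuw
    have hsetu : {v | G.Adj u v ∧ v ∉ S ∧ save v ≠ some u}
        = {v | G.Adj u v ∧ lt v u ∧ save v ≠ some u} := by
      ext v; simp only [Set.mem_setOf_eq, hmem v]
    have hsetw : {v | G.Adj w v ∧ v ∉ S ∧ save v ≠ some w}
        = {v | G.Adj w v ∧ lt v u ∧ save v ≠ some w} := by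
      ext v; simp only [Set.mem_setOf_eq, hmem v]
    have hlt2 : {v | G.Adj u v ∧ v ∉ S ∧ save v ≠ some u}.ncard <
        {v | G.Adj w v ∧ v ∉ S ∧ save v ≠ some w}.ncard := by
      rw [hsetu, hsetw]; exact hlegal u w hsave
    have hec : ∀ v, G.Adj u v ∧ v ≠ w →
        {v' | G.Adj v v' ∧ v' ∉ S.erase u ∧ save v' ≠ some v}.ncard
          = {v' | G.Adj v v' ∧ v' ∉ S ∧ save v' ≠ some v}.ncard + 1 := by
      intro v hc
      rw [erase_count G save S u hu v,
        if_pos ⟨hc.1.symm, (by simp only [hsave, ne_eq, Option.some.injEq]; exact fun h => hc.2 h.symm)⟩]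
    have hec' : ∀ v, ¬ (G.Adj u v ∧ v ≠ w) →
        {v' | G.Adj v v' ∧ v' ∉ S.erase u ∧ save v' ≠ some v}.ncard
          = {v' | G.Adj v v' ∧ v' ∉ S ∧ save v' ≠ some v}.ncard := by
      intro v hc
      rw [erase_count G save S u hu v, if_neg ?_, Nat.add_zero]
      rintro ⟨h1, h2⟩
      simp only [hsave, ne_eq, Option.some.injEq] at h2
      exact hc ⟨h1.symm, fun h => h2 h.symm⟩
    refine WeakDegenOn.delSave S _ u w hu hw hadjuw ?_ (fun v hv => ?_) ?_
    · omega
    · have h1 := hcle v hv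
      split_ifs with h
      · rw [hec v h] at h1; omega
      · rw [hec' v h] at h1; omega
    · refine WeakDegenOn.congr ihS (fun v hv => ?_)
      split_ifs with h
      · rw [hec v h]; push_cast; ring
      · rw [hec' v h]


theorem weaklyDegenerate_of_removal_scheme {V : Type*} [Fintype V] (G : SimpleGraph V)
    [DecidableRel G.Adj] (d : ℕ) (hdeg : ∀ v, G.degree v ≤ d)
    (lt : V → V → Prop) (hlt : IsStrictTotalOrder V lt)
    (save : V → Option V)
    (hscheme : ∀ u w, save u = some w → G.Adj u w ∧ lt u w)
    (hlegal : ∀ u w, save u = some w →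
      {v | G.Adj u v ∧ lt v u ∧ save v ≠ some u}.ncard <
        {v | G.Adj w v ∧ lt v u ∧ save v ≠ some w}.ncard) :
    WeaklyDegenerate G (d - sInf (Set.range fun u : V =>
      {v | G.Adj u v ∧ lt u v}.ncard + {v | G.Adj u v ∧ save v = some u}.ncard)) := by
  haveI := hlt
  set gp := sInf (Set.range fun u : V =>
      {v | G.Adj u v ∧ lt u v}.ncard + {v | G.Adj u v ∧ save v = some u}.ncard) with hgp
  have hk : ∀ x : V, G.degree x ≤
      (d - gp) + ({v | G.Adj x v ∧ lt x v}.ncard + {v | G.Adj x v ∧ save v = some x}.ncard) := by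
    intro x
    have h1 := ab_le_deg G lt hlt save hscheme x
    have h2 : gp ≤ {v | G.Adj x v ∧ lt x v}.ncard + {v | G.Adj x v ∧ save v = some x}.ncard :=
      Nat.sInf_le ⟨x, rfl⟩
    have h3 := hdeg x
    omega
  have haux := aux G lt hlt save hscheme hlegal (d - gp) hk Finset.univ (by simp)
  refine WeakDegenOn.congr haux (fun v _ => ?_)
  have he : {v' | G.Adj v v' ∧ v' ∉ (Finset.univ : Finset V) ∧ save v' ≠ some v} = ∅ := by
    ext v'; simp
  rw [he]
  simp

end WeakDeg
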